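/- Write e(q₂,q₃,α) = (Q(q₂,q₃,α), P(q₂,q₃,α)) with Q = (q₁*, q₂, q₃) and P = (α, ½·α·√(4−α²), α²/2). Then the pullback by e of the canonical symplectic form ω = Σ_i dq_i ∧ dp_i on ℝ³ × ℝ³ vanishes identically; concretely, for every (q₂,q₃,α) ∈ ℝ² × (−2,2) and all vectors u, v ∈ ℝ³: ⟨DQ(q₂,q₃,α)u, DP(q₂,q₃,α)v⟩ − ⟨DQ(q₂,q₃,α)v, DP(q₂,q₃,α)u⟩ = 0, where ⟨·,·⟩ is the Euclidean inner product on ℝ³ and DQ, DP are the Fréchet derivatives. Hence the image of e is a Lagrange submanifold of (T*ℝ³, ω). -/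

import Mathlib

open RealInnerProductSpace

/-- The `q₁` coordinate of the Lagrange-submanifold embedding of the toy model. -/
noncomputable def q₁star (q₂ q₃ α : ℝ) : ℝ :=
  α ^ 3 - q₃ * α - (1 / 2) * q₂ * Real.sqrt (4 - α ^ 2)
    + (1 / 2) * q₂ * α ^ 2 * (Real.sqrt (4 - α ^ 2))⁻¹

/-- The base-point component `Q(q₂,q₃,α) = (q₁*, q₂, q₃)` of the embedding `e`. -/
noncomputable def Qmap (x : ℝ × ℝ × ℝ) : EuclideanSpace ℝ (Fin 3) :=
  WithLp.toLp 2 ![q₁star x.1 x.2.1 x.2.2, x.1, x.2.1]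

/-- The momentum component `P(q₂,q₃,α) = (α, ½α√(4−α²), α²/2)` of the embedding `e`. -/
noncomputable def Pmap (x : ℝ × ℝ × ℝ) : EuclideanSpace ℝ (Fin 3) :=
  WithLp.toLp 2 ![x.2.2, (1 / 2) * x.2.2 * Real.sqrt (4 - x.2.2 ^ 2), x.2.2 ^ 2 / 2]

namespace LagrangeAux

open ContinuousLinearMap

noncomputable def l1 : (ℝ × ℝ × ℝ) →L[ℝ] ℝ := fst ℝ ℝ (ℝ × ℝ)
noncomputable def l2 : (ℝ × ℝ × ℝ) →L[ℝ] ℝ := (fst ℝ ℝ ℝ).comp (snd ℝ ℝ (ℝ × ℝ))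
noncomputable def l3 : (ℝ × ℝ × ℝ) →L[ℝ] ℝ := (snd ℝ ℝ ℝ).comp (snd ℝ ℝ (ℝ × ℝ))

@[simp] lemma l1_apply (u : ℝ × ℝ × ℝ) : l1 u = u.1 := rfl
@[simp] lemma l2_apply (u : ℝ × ℝ × ℝ) : l2 u = u.2.1 := rfl
@[simp] lemma l3_apply (u : ℝ × ℝ × ℝ) : l3 u = u.2.2 := rfl

lemma h1 (x : ℝ × ℝ × ℝ) : HasFDerivAt (fun y : ℝ × ℝ × ℝ => y.1) l1 x := hasFDerivAt_fst
lemma h2 (x : ℝ × ℝ × ℝ) : HasFDerivAt (fun y : ℝ × ℝ × ℝ => y.2.1) l2 x :=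
  hasFDerivAt_fst.comp x hasFDerivAt_snd
lemma h3 (x : ℝ × ℝ × ℝ) : HasFDerivAt (fun y : ℝ × ℝ × ℝ => y.2.2) l3 x :=
  hasFDerivAt_snd.comp x hasFDerivAt_snd

lemma hasDerivAt_sqrtc (α : ℝ) (h4 : 0 < 4 - α ^ 2) :
    HasDerivAt (fun t : ℝ => Real.sqrt (4 - t ^ 2)) (-α * (Real.sqrt (4 - α ^ 2))⁻¹) α := by
  have hne : (4 : ℝ) - α ^ 2 ≠ 0 := ne_of_gt h4
  have hs : Real.sqrt (4 - α ^ 2) ≠ 0 := by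
    positivity
  have h := ((hasDerivAt_pow 2 α).const_sub 4).sqrt hne
  convert h using 1
  push_cast
  field_simp

/-- Derivative of the first component of `Qmap`. -/
lemma hasFDerivAt_q1 (q₂ q₃ α : ℝ) (h4 : 0 < 4 - α ^ 2) :
    HasFDerivAt (fun x : ℝ × ℝ × ℝ => q₁star x.1 x.2.1 x.2.2)
      (((-(1 / 2)) * Real.sqrt (4 - α ^ 2) + (1 / 2) * α ^ 2 * (Real.sqrt (4 - α ^ 2))⁻¹) • l1
        + (-α) • l2
        + (3 * α ^ 2 - q₃ + (3 / 2) * q₂ * α * (Real.sqrt (4 - α ^ 2))⁻¹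
            + (1 / 2) * q₂ * α ^ 3 * ((Real.sqrt (4 - α ^ 2))⁻¹) ^ 3) • l3)
      (q₂, q₃, α) := by
  have hs : Real.sqrt (4 - α ^ 2) ≠ 0 := by positivity
  have hsq : HasFDerivAt (fun x : ℝ × ℝ × ℝ => Real.sqrt (4 - x.2.2 ^ 2))
      ((-α * (Real.sqrt (4 - α ^ 2))⁻¹) • l3) (q₂, q₃, α) := by
    have := (hasDerivAt_sqrtc α h4).comp_hasFDerivAt (q₂, q₃, α) (h3 _); exact this
  have hinv : HasFDerivAt (fun x : ℝ × ℝ × ℝ => (Real.sqrt (4 - x.2.2 ^ 2))⁻¹)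
      ((-(-α * (Real.sqrt (4 - α ^ 2))⁻¹) / Real.sqrt (4 - α ^ 2) ^ 2) • l3) (q₂, q₃, α) := by
    have := (((hasDerivAt_sqrtc α h4).inv hs)).comp_hasFDerivAt (q₂, q₃, α) (h3 _); exact this
  have hcube : HasFDerivAt (fun x : ℝ × ℝ × ℝ => x.2.2 ^ 3)
      (((3 : ℕ) * α ^ 2 : ℝ) • l3) (q₂, q₃, α) := by
    have := (hasDerivAt_pow 3 α).comp_hasFDerivAt (q₂, q₃, α) (h3 _); exact this
  have hpow2 : HasFDerivAt (fun x : ℝ × ℝ × ℝ => x.2.2 ^ 2)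
      (((2 : ℕ) * α ^ 1 : ℝ) • l3) (q₂, q₃, α) := by
    have := (hasDerivAt_pow 2 α).comp_hasFDerivAt (q₂, q₃, α) (h3 _); exact this
  have hbig := ((hcube.sub ((h2 _).mul (h3 _))).sub (((h1 _).const_mul (1 / 2)).mul hsq)).add
    ((((h1 _).const_mul (1 / 2)).mul hpow2).mul hinv)
  have hs2 : Real.sqrt (4 - α ^ 2) ^ 2 = 4 - α ^ 2 := Real.sq_sqrt h4.le
  refine (hbig.congr_fderiv ?_)
  refine ContinuousLinearMap.ext fun u => ?_
  simp only [add_apply, smul_apply, sub_apply, l1_apply, l2_apply, l3_apply, smul_eq_mul,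
    Pi.mul_apply]
  field_simp
  ring

/-- Derivative of the second component of `Pmap`. -/
lemma hasFDerivAt_p2 (q₂ q₃ α : ℝ) (h4 : 0 < 4 - α ^ 2) :
    HasFDerivAt (fun x : ℝ × ℝ × ℝ => (1 / 2) * x.2.2 * Real.sqrt (4 - x.2.2 ^ 2))
      (((1 / 2) * Real.sqrt (4 - α ^ 2) - (1 / 2) * α ^ 2 * (Real.sqrt (4 - α ^ 2))⁻¹) • l3)
      (q₂, q₃, α) := by
  have hsq : HasFDerivAt (fun x : ℝ × ℝ × ℝ => Real.sqrt (4 - x.2.2 ^ 2))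
      ((-α * (Real.sqrt (4 - α ^ 2))⁻¹) • l3) (q₂, q₃, α) := by
    have := (hasDerivAt_sqrtc α h4).comp_hasFDerivAt (q₂, q₃, α) (h3 _); exact this
  have hbig := (((h3 (q₂, q₃, α)).const_mul (1 / 2)).mul hsq)
  refine hbig.congr_fderiv ?_
  refine ContinuousLinearMap.ext fun u => ?_
  simp only [add_apply, smul_apply, sub_apply, l3_apply, smul_eq_mul]
  ring

/-- Derivative of the third component of `Pmap`. -/
lemma hasFDerivAt_p3 (q₂ q₃ α : ℝ) :
    HasFDerivAt (fun x : ℝ × ℝ × ℝ => x.2.2 ^ 2 / 2) (α • l3) (q₂, q₃, α) := by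
  have hbig := ((hasDerivAt_pow 2 α).div_const 2).comp_hasFDerivAt (q₂, q₃, α) (h3 _)
  refine hbig.congr_fderiv ?_
  refine ContinuousLinearMap.ext fun u => ?_
  simp only [smul_apply, l3_apply, smul_eq_mul]
  push_cast
  ring

end LagrangeAux

open LagrangeAux ContinuousLinearMap in
/-- The pullback by `e = (Q,P)` of the canonical symplectic form `ω = Σ dqᵢ ∧ dpᵢ` vanishes:
for every point of `ℝ² × (−2,2)` and all vectors `u,v`,
`⟨DQ u, DP v⟩ − ⟨DQ v, DP u⟩ = 0`.  Hence the image of `e` is a Lagrange submanifold. -/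
theorem pullback_symplectic_form_vanishes :
    ∀ x ∈ (Set.univ ×ˢ Set.univ ×ˢ Set.Ioo (-2 : ℝ) 2 : Set (ℝ × ℝ × ℝ)),
      ∀ u v : ℝ × ℝ × ℝ,
        (inner ℝ (fderiv ℝ Qmap x u) (fderiv ℝ Pmap x v) : ℝ)
          - (inner ℝ (fderiv ℝ Qmap x v) (fderiv ℝ Pmap x u) : ℝ) = 0 := by
  rintro ⟨q₂, q₃, α⟩ ⟨-, -, hα⟩ u v
  have h4 : (0 : ℝ) < 4 - α ^ 2 := by nlinarith [hα.1, hα.2]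
  set e : (Fin 3 → ℝ) ≃L[ℝ] EuclideanSpace ℝ (Fin 3) :=
    (PiLp.continuousLinearEquiv 2 ℝ (fun _ : Fin 3 => ℝ)).symm with he
  set A : (ℝ × ℝ × ℝ) →L[ℝ] ℝ :=
    ((-(1 / 2)) * Real.sqrt (4 - α ^ 2) + (1 / 2) * α ^ 2 * (Real.sqrt (4 - α ^ 2))⁻¹) • l1
      + (-α) • l2
      + (3 * α ^ 2 - q₃ + (3 / 2) * q₂ * α * (Real.sqrt (4 - α ^ 2))⁻¹
          + (1 / 2) * q₂ * α ^ 3 * ((Real.sqrt (4 - α ^ 2))⁻¹) ^ 3) • l3 with hA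
  set B : (ℝ × ℝ × ℝ) →L[ℝ] ℝ :=
    ((1 / 2) * Real.sqrt (4 - α ^ 2) - (1 / 2) * α ^ 2 * (Real.sqrt (4 - α ^ 2))⁻¹) • l3 with hB
  have hQpi : HasFDerivAt (fun x : ℝ × ℝ × ℝ => (![q₁star x.1 x.2.1 x.2.2, x.1, x.2.1] : Fin 3 → ℝ))
      (pi ![A, l1, l2]) (q₂, q₃, α) := by
    apply hasFDerivAt_pi''
    intro i
    fin_cases i <;>
      simp only [proj_pi, Matrix.cons_val_zero, Matrix.cons_val_one, Matrix.head_cons,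
        Fin.mk_one, Matrix.cons_val_fin_one, Fin.isValue, Matrix.cons_val_two, Matrix.tail_cons]
    · exact hasFDerivAt_q1 q₂ q₃ α h4
    · exact h1 _
    · exact h2 _
  have hPpi : HasFDerivAt (fun x : ℝ × ℝ × ℝ =>
        (![x.2.2, (1 / 2) * x.2.2 * Real.sqrt (4 - x.2.2 ^ 2), x.2.2 ^ 2 / 2] : Fin 3 → ℝ))
      (pi ![l3, B, α • l3]) (q₂, q₃, α) := by
    apply hasFDerivAt_pi''
    intro i
    fin_cases i <;>
      simp only [proj_pi, Matrix.cons_val_zero, Matrix.cons_val_one, Matrix.head_cons,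
        Fin.mk_one, Matrix.cons_val_fin_one, Fin.isValue, Matrix.cons_val_two, Matrix.tail_cons]
    · exact h3 _
    · exact hasFDerivAt_p2 q₂ q₃ α h4
    · exact hasFDerivAt_p3 q₂ q₃ α
  have hQ : HasFDerivAt Qmap (e.toContinuousLinearMap.comp (pi ![A, l1, l2])) (q₂, q₃, α) :=
    e.toContinuousLinearMap.hasFDerivAt.comp _ hQpi
  have hP : HasFDerivAt Pmap (e.toContinuousLinearMap.comp (pi ![l3, B, α • l3])) (q₂, q₃, α) :=
    e.toContinuousLinearMap.hasFDerivAt.comp _ hPpi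
  rw [hQ.fderiv, hP.fderiv]
  simp only [coe_comp', Function.comp_apply, ContinuousLinearEquiv.coe_coe]
  rw [PiLp.inner_apply, PiLp.inner_apply]
  simp only [Fin.sum_univ_three, RCLike.inner_apply, starRingEnd_apply, star_trivial]
  simp only [he, PiLp.coe_symm_continuousLinearEquiv, PiLp.toLp_apply,
    ContinuousLinearMap.pi_apply, Matrix.cons_val_zero, Matrix.cons_val_one, Matrix.head_cons,
    Matrix.cons_val_two, Matrix.tail_cons, hA, hB, add_apply, smul_apply, l1_apply, l2_apply,
    l3_apply, smul_eq_mul]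
  ring
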